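/- Let x : ℤ → Σ be a bi-infinite uniformly recurrent (quasiperiodic) sequence over a finite alphabet. Then for all positive integers q and N there exists L = L(x, N, q) such that for every position s, the factor of length N at position s reappears at some position s + qt with 0 < qt < L. In particular the bound L does not depend on s. -/

import Mathlib

set_option linter.unusedSectionVars false
set_option maxHeartbeats 1000000

namespace Stmt1Aux

variable {A : Type*}

/-- Shift of a bi-infinite sequence: `shf n u k = u (k + n)`. -/
def shf (n : ℤ) (u : ℤ → A) : ℤ → A := fun k => u (k + n)

lemma shf_shf (a b : ℤ) (u : ℤ → A) : shf a (shf b u) = shf (a + b) u := by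
  funext k; simp [shf, add_assoc]

lemma shf_zero (u : ℤ → A) : shf 0 u = u := by funext k; simp [shf]

section Top
variable [TopologicalSpace A] [DiscreteTopology A]

lemma continuous_shf (n : ℤ) : Continuous (shf (A := A) n) :=
  continuous_pi fun k => continuous_apply (k + n)

lemma isOpen_cyl (F : Finset ℤ) (u : ℤ → A) :
    IsOpen {v : ℤ → A | ∀ k ∈ F, v k = u k} := by
  have h : {v : ℤ → A | ∀ k ∈ F, v k = u k} = ⋂ k ∈ F, {v : ℤ → A | v k = u k} := by
    ext v; simp
  rw [h]
  refine isOpen_biInter_finset fun k _ => ?_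
  have : {v : ℤ → A | v k = u k} = (fun v : ℤ → A => v k) ⁻¹' {u k} := rfl
  rw [this]
  exact IsOpen.preimage (continuous_apply k) (isOpen_discrete {u k})

lemma isOpen_eq2 (a b : ℤ) : IsOpen {v : ℤ → A | v a = v b} := by
  have h : {v : ℤ → A | v a = v b} =
      ⋃ c : A, ((fun v : ℤ → A => v a) ⁻¹' {c} ∩ (fun v : ℤ → A => v b) ⁻¹' {c}) := by
    ext v
    simp only [Set.mem_setOf_eq, Set.mem_iUnion, Set.mem_inter_iff, Set.mem_preimage,
      Set.mem_singleton_iff]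
    exact ⟨fun h => ⟨v b, h, rfl⟩, fun ⟨c, h1, h2⟩ => h1.trans h2.symm⟩
  rw [h]
  exact isOpen_iUnion fun c => (IsOpen.preimage (continuous_apply a) (isOpen_discrete _)).inter
    (IsOpen.preimage (continuous_apply b) (isOpen_discrete _))

lemma mem_closure_of_cyl {S : Set (ℤ → A)} {u : ℤ → A}
    (h : ∀ F : Finset ℤ, ∃ v ∈ S, ∀ k ∈ F, v k = u k) : u ∈ closure S := by
  rw [mem_closure_iff]
  intro O hO huO
  have hmem : O ∈ nhds u := hO.mem_nhds huO
  rw [nhds_pi, Filter.mem_pi] at hmem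
  obtain ⟨I, hIfin, s, hs, hsub⟩ := hmem
  obtain ⟨v, hvS, hv⟩ := h hIfin.toFinset
  refine ⟨v, hsub ?_, hvS⟩
  intro k hk
  have h1 : v k = u k := hv k (hIfin.mem_toFinset.2 hk)
  rw [h1]
  have h2 := hs k
  rwa [nhds_discrete, Filter.mem_pure] at h2

end Top
end Stmt1Aux

open Stmt1Aux in
/-- In a uniformly recurrent sequence, for all positive `q` and all `N` there
is a bound `L` (independent of the position `s`) such that the factor of
length `N` at `s` reappears at `s + q*t` with `0 < q*t < L`. -/
theorem stmt_1 {A : Type*} [Fintype A] (x : ℤ → A)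
    (hur : ∀ n : ℕ, ∃ m : ℕ, ∀ s t : ℤ, ∃ p : ℤ, t ≤ p ∧ p + n ≤ t + m ∧
      ∀ i : ℕ, i < n → x (p + i) = x (s + i))
    (q : ℤ) (hq : 0 < q) (N : ℕ) :
    ∃ L : ℤ, ∀ s : ℤ, ∃ t : ℤ, 0 < q * t ∧ q * t < L ∧
      ∀ i : ℕ, i < N → x (s + i) = x (s + q * t + i) := by
  classical
  letI : TopologicalSpace A := ⊥
  haveI : DiscreteTopology A := ⟨rfl⟩
  haveI : CompactSpace (ℤ → A) := by infer_instance
  haveI : T2Space (ℤ → A) := by infer_instance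
  -- the orbit and orbit closure of x
  set orb : Set (ℤ → A) := Set.range (fun n : ℤ => shf n x) with horb_def
  set X : Set (ℤ → A) := closure orb with hX_def
  have hxX : x ∈ X := subset_closure ⟨0, shf_zero x⟩
  have hshf_orb : ∀ n : ℤ, shf n '' orb ⊆ orb := by
    rintro n _ ⟨_, ⟨t, rfl⟩, rfl⟩
    exact ⟨n + t, (shf_shf n t x).symm⟩
  have hXinv : ∀ n : ℤ, shf n '' X ⊆ X := fun n =>
    (image_closure_subset_closure_image (continuous_shf n)).trans
      (closure_mono (hshf_orb n))
  -- Lemma (A): every x-window occurs in every point of X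
  have hA : ∀ y ∈ X, ∀ (s : ℤ) (n : ℕ), ∃ p : ℤ, ∀ i : ℕ, i < n →
      y (p + i) = x (s + i) := by
    intro y hy s n
    obtain ⟨m, hm⟩ := hur n
    have hO : IsOpen {v : ℤ → A | ∀ k ∈ Finset.Icc (0:ℤ) (m + n), v k = y k} :=
      isOpen_cyl _ y
    obtain ⟨v, hvO, hvorb⟩ := (mem_closure_iff.1 hy) _ hO (fun k _ => rfl)
    obtain ⟨t₀, rfl⟩ := hvorb
    obtain ⟨p', hp1, hp2, hp3⟩ := hm s t₀
    refine ⟨p' - t₀, fun i hi => ?_⟩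
    have hk : (p' - t₀ + (i:ℤ)) ∈ Finset.Icc (0:ℤ) (m + n) :=
      Finset.mem_Icc.2 ⟨by omega, by omega⟩
    have h1 := hvO _ hk
    calc y (p' - t₀ + (i:ℤ)) = shf t₀ x (p' - t₀ + (i:ℤ)) := h1.symm
    _ = x (p' + (i:ℤ)) := congrArg x (by ring)
    _ = x (s + (i:ℤ)) := hp3 i hi
  -- Zorn: minimal nonempty closed (shf q)-forward-invariant subset
  set S : Set (Set (ℤ → A)) :=
    {C | C.Nonempty ∧ IsClosed C ∧ shf q '' C ⊆ C} with hS_def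
  have hXS : X ∈ S := ⟨⟨x, hxX⟩, isClosed_closure, hXinv q⟩
  obtain ⟨M, hMsub, hMmin⟩ := zorn_superset_nonempty S (by
    intro c hcS hchain hcne
    refine ⟨⋂₀ c, ⟨?_, ?_, ?_⟩, fun s hs => Set.sInter_subset_of_mem hs⟩
    · haveI : Nonempty c := hcne.to_subtype
      exact IsCompact.nonempty_sInter_of_directed_nonempty_isCompact_isClosed
        (fun a ha b hb => (hchain.total ha hb).elim
          (fun h => ⟨a, ha, Set.Subset.refl a, h⟩)
          (fun h => ⟨b, hb, h, Set.Subset.refl b⟩)) (fun U hU => (hcS hU).1)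
        (fun U hU => (hcS hU).2.1.isCompact) (fun U hU => (hcS hU).2.1)
    · exact isClosed_sInter fun U hU => (hcS hU).2.1
    · rintro _ ⟨u, hu, rfl⟩
      exact Set.mem_sInter.2 fun U hU => (hcS hU).2.2 ⟨u, Set.mem_sInter.1 hu U hU, rfl⟩) X hXS
  have hMne : M.Nonempty := hMmin.1.1
  have hMclosed : IsClosed M := hMmin.1.2.1
  have hMinv : shf q '' M ⊆ M := hMmin.1.2.2
  have hMcpt : IsCompact M := hMclosed.isCompact
  -- shf q '' M = M
  have hMeq : shf q '' M = M := by
    refine subset_antisymm hMinv (hMmin.2 ⟨hMne.image _, ?_, ?_⟩ hMinv)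
    · exact (hMcpt.image (continuous_shf q)).isClosed
    · exact Set.image_mono hMinv
  -- all q-multiples of the shift preserve M
  have hMzmul : ∀ (a : ℤ), ∀ u ∈ M, shf (q * a) u ∈ M := by
    intro a
    induction a using Int.induction_on with
    | zero => intro u hu; rw [mul_zero, shf_zero]; exact hu
    | succ a ih =>
      intro u hu
      have h1 : shf (q * (a + 1)) u = shf q (shf (q * a) u) := by
        rw [shf_shf]; exact congrArg (fun n => shf n u) (by ring)
      rw [h1]; exact hMinv ⟨_, ih u hu, rfl⟩
    | pred a ih =>
      intro u hu
      have hw : shf (q * (-a)) u ∈ M := ih u hu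
      rw [← hMeq] at hw
      obtain ⟨v, hv, hv2⟩ := hw
      have h1 : shf (q * (-(a:ℤ) - 1)) u = shf (-q) (shf (q * (-(a:ℤ))) u) := by
        rw [shf_shf]; exact congrArg (fun n => shf n u) (by ring)
      have h2 : shf (-q) (shf (q * (-a)) u) = v := by
        rw [← hv2, shf_shf, neg_add_cancel, shf_zero]
      rw [h1, h2]; exact hv
  -- forward orbit closures are all of M
  have horbM : ∀ u ∈ M,
      closure {v | ∃ t : ℤ, 1 ≤ t ∧ v = shf (q * t) u} = M := by
    intro u hu
    set O : Set (ℤ → A) := {v | ∃ t : ℤ, 1 ≤ t ∧ v = shf (q * t) u} with hO_def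
    have hOM : O ⊆ M := by rintro v ⟨t, ht, rfl⟩; exact hMzmul t u hu
    have hclM : closure O ⊆ M := closure_minimal hOM hMclosed
    have hOinv : shf q '' O ⊆ O := by
      rintro _ ⟨_, ⟨t, ht, rfl⟩, rfl⟩
      refine ⟨t + 1, by omega, ?_⟩
      rw [shf_shf]; exact congrArg (fun n => shf n u) (by ring)
    have hOS : closure O ∈ S := by
      refine ⟨⟨shf (q * 1) u, subset_closure ⟨1, le_refl 1, rfl⟩⟩, isClosed_closure, ?_⟩
      exact (image_closure_subset_closure_image (continuous_shf q)).trans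
        (closure_mono hOinv)
    exact subset_antisymm hclM (hMmin.2 hOS hclM)
  obtain ⟨z₀, hz₀⟩ := hMne
  set Q : ℕ := q.toNat with hQ_def
  have hQ : (Q : ℤ) = q := Int.toNat_of_nonneg hq.le
  -- Y : the union of the first q shifts of M; it contains the whole orbit closure
  set Y : Set (ℤ → A) := ⋃ j ∈ Finset.range Q, shf (j:ℤ) '' M with hY_def
  have hYclosed : IsClosed Y := by
    refine isClosed_biUnion_finset fun j _ => ?_
    exact (hMcpt.image (continuous_shf _)).isClosed
  have horbY : ∀ n : ℤ, shf n z₀ ∈ Y := by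
    intro n
    have h1 : 0 ≤ n % q := Int.emod_nonneg _ (ne_of_gt hq)
    have h2 : n % q < q := Int.emod_lt_of_pos _ hq
    have hmem : (n % q).toNat ∈ Finset.range Q := Finset.mem_range.2 (by omega)
    refine Set.mem_biUnion hmem ?_
    refine ⟨shf (q * (n / q)) z₀, hMzmul _ _ hz₀, ?_⟩
    rw [shf_shf]
    refine congrArg (fun k => shf k z₀) ?_
    rw [Int.toNat_of_nonneg h1]
    have := Int.mul_ediv_add_emod n q
    linarith
  have hxY : x ∈ Y := by
    have hz₀X : z₀ ∈ X := hMsub hz₀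
    have hx_cl : x ∈ closure {v | ∃ n : ℤ, v = shf n z₀} := by
      apply mem_closure_of_cyl
      intro F
      set K : ℕ := F.sup fun k => k.natAbs with hK_def
      obtain ⟨p, hp⟩ := hA z₀ hz₀X (-(K:ℤ)) (2*K+1)
      refine ⟨shf (p + K) z₀, ⟨p + K, rfl⟩, ?_⟩
      intro k hk
      have hkK : k.natAbs ≤ K := Finset.le_sup hk
      obtain ⟨i, hi1, hi2⟩ : ∃ i : ℕ, i < 2*K+1 ∧ (k : ℤ) = -(K:ℤ) + i :=
        ⟨(k + K).toNat, by omega, by omega⟩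
      calc shf (p + K) z₀ k = z₀ (k + (p + (K:ℤ))) := rfl
      _ = z₀ (p + (i:ℤ)) := congrArg z₀ (by omega)
      _ = x (-(K:ℤ) + i) := hp i hi1
      _ = x k := congrArg x (by omega)
    have hsub : {v | ∃ n : ℤ, v = shf n z₀} ⊆ Y := by
      rintro v ⟨n, rfl⟩; exact horbY n
    exact closure_minimal hsub hYclosed hx_cl
  obtain ⟨j, hjQ, z, hzM, hzx⟩ : ∃ j : ℕ, j < Q ∧ ∃ z ∈ M, shf (j:ℤ) z = x := by
    rw [hY_def] at hxY
    simp only [Set.mem_iUnion, Finset.mem_range, Set.mem_image] at hxY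
    obtain ⟨j, hj, z, hz, hzz⟩ := hxY
    exact ⟨j, hj, z, hz, hzz⟩
  -- the open "return" sets
  set W : ℤ → Set (ℤ → A) :=
    fun t => {v | ∀ i : ℕ, i < N + Q → v (q * t + i) = v i} with hW_def
  have hWopen : ∀ t, IsOpen (W t) := by
    intro t
    have h : W t = ⋂ i ∈ Finset.range (N + Q), {v : ℤ → A | v (q * t + i) = v i} := by
      ext v; simp [hW_def]
    rw [h]
    exact isOpen_biInter_finset fun i _ => isOpen_eq2 _ _
  set U : ℤ → Set (ℤ → A) := fun t => if 1 ≤ t then W t else ∅ with hU_def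
  have hUopen : ∀ t, IsOpen (U t) := by
    intro t
    by_cases h : 1 ≤ t <;> simp [hU_def, h, hWopen]
  have hcover : M ⊆ ⋃ t, U t := by
    intro u hu
    have hucl : u ∈ closure {v | ∃ t : ℤ, 1 ≤ t ∧ v = shf (q * t) u} := by
      rw [horbM u hu]; exact hu
    have hO : IsOpen {v : ℤ → A | ∀ k ∈ Finset.Icc (0:ℤ) (N + Q), v k = u k} :=
      isOpen_cyl _ u
    obtain ⟨v, hvO, t, ht1, rfl⟩ := (mem_closure_iff.1 hucl) _ hO (fun k _ => rfl)
    refine Set.mem_iUnion.2 ⟨t, ?_⟩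
    rw [hU_def]
    simp only [if_pos ht1]
    intro i hi
    have h1 := hvO (i:ℤ) (Finset.mem_Icc.2 ⟨by omega, by omega⟩)
    -- h1 : shf (q*t) u i = u i, i.e. u (i + q*t) = u i
    calc u (q * t + (i:ℤ)) = u ((i:ℤ) + q * t) := congrArg u (by ring)
    _ = u (i:ℤ) := h1
  obtain ⟨F, hF⟩ := hMcpt.elim_finite_subcover U hUopen hcover
  set B : ℕ := F.sup fun t => t.toNat with hB_def
  refine ⟨q * B + 1, ?_⟩
  intro s
  set r : ℤ := (s + j) % q with hr_def
  set a : ℤ := (s + j) / q with ha_def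
  have hr0 : 0 ≤ r := Int.emod_nonneg _ (ne_of_gt hq)
  have hrq : r < q := Int.emod_lt_of_pos _ hq
  have hsj : q * a + r = s + j := Int.mul_ediv_add_emod (s + j) q
  set z' : ℤ → A := shf (q * a) z with hz'_def
  have hz'M : z' ∈ M := hMzmul a z hzM
  obtain ⟨t, htF, htU⟩ : ∃ t ∈ F, z' ∈ U t := by
    have := hF hz'M
    simpa using Set.mem_iUnion₂.1 this
  have ht1 : 1 ≤ t := by
    by_contra h
    rw [hU_def] at htU
    simp [h] at htU
  have htW : ∀ i : ℕ, i < N + Q → z' (q * t + i) = z' i := by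
    rw [hU_def] at htU
    simp only [if_pos ht1, hW_def, Set.mem_setOf_eq] at htU
    exact htU
  have htB : t ≤ (B:ℤ) := by
    have h2 : t.toNat ≤ B := by
      simpa using Finset.le_sup (f := fun t : ℤ => t.toNat) htF
    omega
  refine ⟨t, mul_pos hq (by omega), ?_, ?_⟩
  · have h1 : q * t ≤ q * B := mul_le_mul_of_nonneg_left htB hq.le
    linarith
  · intro k hk
    have hxz : ∀ n : ℤ, x n = z (n + j) := by
      intro n; rw [← hzx]; rfl
    have hz'ap : ∀ n : ℤ, z' n = z (n + q * a) := fun n => rfl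
    have hrR : ((r.toNat : ℕ) : ℤ) = r := Int.toNat_of_nonneg hr0
    have hW1 := htW (r.toNat + k) (by omega)
    -- hW1 : z' (q*t + (r.toNat + k)) = z' (r.toNat + k)
    calc x (s + (k:ℤ)) = z (s + k + j) := hxz _
    _ = z' (r + k) := by rw [hz'ap]; exact congrArg z (by linarith)
    _ = z' (((r.toNat + k : ℕ) : ℤ)) := congrArg z' (by push_cast; omega)
    _ = z' (q * t + ((r.toNat + k : ℕ) : ℤ)) := hW1.symm
    _ = z' (q * t + r + k) := congrArg z' (by push_cast; omega)
    _ = z (q * t + r + k + q * a) := hz'ap _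
    _ = z (s + q * t + k + j) := congrArg z (by linarith)
    _ = x (s + q * t + (k:ℤ)) := (hxz _).symm
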